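/- Let p be an odd prime, s ≥ 1, n = 2g+1, and Φ_s(t,z) = ((t-z_1)···(t-z_n))^((p^s-1)/2). For ℓ = 1,...,g, let I_{s,ℓ}(z) = (I_{s,ℓ,1},...,I_{s,ℓ,n}) be the coefficient of t^(ℓp^s - 1) in the vector (Φ_s/(t-z_1), ..., Φ_s/(t-z_n)). Then I_{s,ℓ} is a polynomial solution modulo p^s of the KZ system: ∂I/∂z_i ≡ (1/2)Σ_{j≠i} (Ω_{ij}/(z_i - z_j))·I (mod p^s) for all i (after clearing the denominators z_i - z_j), and I_{s,ℓ,1} + ... + I_{s,ℓ,n} ≡ 0 (mod p^s). -/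

import Mathlib

open Polynomial

/-- The master polynomial `Φ_s(t,z) = ((t-z_1)⋯(t-z_n))^((p^s-1)/2)`, as a polynomial
in `t` with coefficients in `ℤ[z_1,…,z_n]`. -/
noncomputable def masterPoly (p s n : ℕ) : Polynomial (MvPolynomial (Fin n) ℤ) :=
  (∏ i : Fin n, (X - C (MvPolynomial.X i))) ^ ((p ^ s - 1) / 2)

/-- `Φ_s(t,z)/(t - z_i) = (t-z_i)^((p^s-1)/2 - 1) · ∏_{j≠i} (t-z_j)^((p^s-1)/2)`. -/
noncomputable def masterQuot (p s n : ℕ) (i : Fin n) :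
    Polynomial (MvPolynomial (Fin n) ℤ) :=
  (X - C (MvPolynomial.X i)) ^ ((p ^ s - 1) / 2 - 1) *
    ∏ j ∈ Finset.univ.erase i, (X - C (MvPolynomial.X j)) ^ ((p ^ s - 1) / 2)

/-- The matrix `Ω_{ij}`: `-1` at positions `(i,i)`, `(j,j)`, `+1` at `(i,j)`, `(j,i)`,
`0` elsewhere. -/
def Om (R : Type*) [CommRing R] {n : ℕ} (i j : Fin n) : Matrix (Fin n) (Fin n) R :=
  fun k l =>
    if (k = i ∧ l = i) ∨ (k = j ∧ l = j) then -1
    else if (k = i ∧ l = j) ∨ (k = j ∧ l = i) then 1 else 0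

/-! ### Auxiliary machinery -/

/-- Abbreviation for `t - z_j`. -/
noncomputable abbrev ZZ {n : ℕ} (j : Fin n) : Polynomial (MvPolynomial (Fin n) ℤ) :=
  X - C (MvPolynomial.X j)

/-- `Φ/(t-z_i)` with general exponent `m`. -/
noncomputable def Phi (n : ℕ) (m : ℕ) (i : Fin n) : Polynomial (MvPolynomial (Fin n) ℤ) :=
  ZZ i ^ (m - 1) * ∏ j ∈ Finset.univ.erase i, ZZ j ^ m

/-- `Φ/((t-z_i)(t-z_k))` with general exponent `m`. -/
noncomputable def Psi (n : ℕ) (m : ℕ) (i k : Fin n) : Polynomial (MvPolynomial (Fin n) ℤ) :=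
  ZZ i ^ (m - 1) * ZZ k ^ (m - 1) * ∏ l ∈ (Finset.univ.erase i).erase k, ZZ l ^ m

lemma masterQuot_eq (p s n : ℕ) (i : Fin n) :
    masterQuot p s n i = Phi n ((p ^ s - 1) / 2) i := rfl

/-- The derivation `∂/∂z_i` applied coefficientwise to polynomials in `t`. -/
noncomputable def pdd {n : ℕ} (i : Fin n) :
    Derivation ℤ (Polynomial (MvPolynomial (Fin n) ℤ)) (Polynomial (MvPolynomial (Fin n) ℤ)) :=
  PolynomialModule.equivPolynomialSelf.toLinearMap.compDer ((MvPolynomial.pderiv i).mapCoeffs)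

lemma coeff_pdd {n : ℕ} (i : Fin n) (f : Polynomial (MvPolynomial (Fin n) ℤ)) (m : ℕ) :
    (pdd i f).coeff m = MvPolynomial.pderiv i (f.coeff m) := rfl

lemma pdd_C {n : ℕ} (i : Fin n) (a : MvPolynomial (Fin n) ℤ) :
    pdd i (C a) = C (MvPolynomial.pderiv i a) := by
  apply Polynomial.ext; intro m
  rw [coeff_pdd, coeff_C, coeff_C]
  split_ifs <;> simp

lemma pdd_X {n : ℕ} (i : Fin n) : pdd i (X : Polynomial (MvPolynomial (Fin n) ℤ)) = 0 := by
  apply Polynomial.ext; intro m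
  rw [coeff_pdd, coeff_X]
  split_ifs <;> simp

lemma pdd_Z {n : ℕ} (i j : Fin n) : pdd i (ZZ j) = if j = i then -1 else 0 := by
  rw [ZZ, map_sub, pdd_X, pdd_C, MvPolynomial.pderiv_X, Pi.single_apply]
  split_ifs <;> simp

lemma pdd_prod {n : ℕ} (i : Fin n) (S : Finset (Fin n)) (hi : i ∉ S) (m : ℕ) :
    pdd i (∏ j ∈ S, ZZ j ^ m) = 0 := by
  refine Finset.prod_induction _ (fun f => pdd i f = 0) (fun a b ha hb => ?_) (by simp) ?_
  · show pdd i (a * b) = 0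
    rw [Derivation.leibniz]
    show a • pdd i b + b • pdd i a = 0
    rw [ha, hb]; simp
  · intro j hj
    rw [Derivation.leibniz_pow, pdd_Z, if_neg (fun h : j = i => hi (h ▸ hj))]
    simp

lemma mul_psi_right {n m : ℕ} (hm : 1 ≤ m) {i k : Fin n} (hik : i ≠ k) :
    ZZ k * Psi n m i k = Phi n m i := by
  obtain ⟨m', rfl⟩ : ∃ m', m = m' + 1 := ⟨m - 1, (Nat.succ_pred_eq_of_pos hm).symm⟩
  have hk : k ∈ Finset.univ.erase i := Finset.mem_erase.2 ⟨fun h => hik h.symm, Finset.mem_univ _⟩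
  rw [Phi, Psi, ← Finset.mul_prod_erase _ _ hk]
  simp only [Nat.add_sub_cancel]
  ring

lemma mul_psi_left {n m : ℕ} (hm : 1 ≤ m) {i k : Fin n} (hik : i ≠ k) :
    ZZ i * Psi n m i k = Phi n m k := by
  obtain ⟨m', rfl⟩ : ∃ m', m = m' + 1 := ⟨m - 1, (Nat.succ_pred_eq_of_pos hm).symm⟩
  have hi : i ∈ Finset.univ.erase k := Finset.mem_erase.2 ⟨hik, Finset.mem_univ _⟩
  rw [Phi, Psi, ← Finset.mul_prod_erase _ _ hi, Finset.erase_right_comm]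
  simp only [Nat.add_sub_cancel]
  ring

lemma phi_sub_phi {n m : ℕ} (hm : 1 ≤ m) {i k : Fin n} (hik : i ≠ k) :
    Phi n m i - Phi n m k = C (MvPolynomial.X i - MvPolynomial.X k) * Psi n m i k := by
  rw [← mul_psi_right hm hik, ← mul_psi_left hm hik, map_sub]
  ring

lemma pdd_phi_ne {n : ℕ} (m : ℕ) {i k : Fin n} (hik : i ≠ k) :
    pdd i (Phi n m k) = -((m : Polynomial (MvPolynomial (Fin n) ℤ)) * Psi n m i k) := by
  have hi : i ∈ Finset.univ.erase k := Finset.mem_erase.2 ⟨hik, Finset.mem_univ _⟩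
  rw [Phi, ← Finset.mul_prod_erase _ _ hi]
  rw [Derivation.leibniz, Derivation.leibniz_pow, pdd_Z, if_neg (fun h : k = i => hik h.symm)]
  rw [Derivation.leibniz, Derivation.leibniz_pow, pdd_Z, if_pos rfl,
    pdd_prod i _ (Finset.notMem_erase i _) m]
  simp only [smul_zero, zero_smul, smul_eq_mul, mul_zero, zero_add, add_zero, smul_neg,
    mul_neg, mul_one, neg_neg, Psi, Finset.erase_right_comm, nsmul_eq_mul]
  ring

lemma pdd_phi_self {n : ℕ} (m : ℕ) (i : Fin n) :
    pdd i (Phi n m i) =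
      -(((m - 1 : ℕ) : Polynomial (MvPolynomial (Fin n) ℤ)) *
        (ZZ i ^ (m - 2) * ∏ j ∈ Finset.univ.erase i, ZZ j ^ m)) := by
  rw [Phi, Derivation.leibniz, Derivation.leibniz_pow, pdd_Z, if_pos rfl,
    pdd_prod i _ (Finset.notMem_erase i _) m]
  simp only [smul_zero, zero_add, smul_eq_mul, smul_neg, mul_neg, mul_one, nsmul_eq_mul,
    Nat.sub_sub]
  ring

lemma deriv_Zpow {n : ℕ} (j : Fin n) (m : ℕ) :
    derivative (ZZ j ^ m) = (m : Polynomial (MvPolynomial (Fin n) ℤ)) * ZZ j ^ (m - 1) := by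
  rw [derivative_pow]
  simp

lemma deriv_prodZ {n : ℕ} (S : Finset (Fin n)) (m : ℕ) :
    derivative (∏ j ∈ S, ZZ j ^ m) =
      ∑ j ∈ S, (m : Polynomial (MvPolynomial (Fin n) ℤ)) *
        (ZZ j ^ (m - 1) * ∏ l ∈ S.erase j, ZZ l ^ m) := by
  induction S using Finset.induction_on with
  | empty => simp
  | @insert a s ha ih =>
    rw [Finset.prod_insert ha, derivative_mul, ih, deriv_Zpow, Finset.sum_insert ha,
      Finset.erase_insert ha, Finset.mul_sum]
    refine congrArg₂ (· + ·) ?_ ?_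
    · ring
    · refine Finset.sum_congr rfl fun j hj => ?_
      rw [Finset.erase_insert_of_ne (fun h : a = j => ha (h ▸ hj)),
        Finset.prod_insert (fun h => ha (Finset.mem_of_mem_erase h))]
      ring

lemma deriv_phi {n : ℕ} (m : ℕ) (i : Fin n) :
    derivative (Phi n m i) =
      ((m - 1 : ℕ) : Polynomial (MvPolynomial (Fin n) ℤ)) *
          (ZZ i ^ (m - 2) * ∏ j ∈ Finset.univ.erase i, ZZ j ^ m) +
        (m : Polynomial (MvPolynomial (Fin n) ℤ)) * ∑ j ∈ Finset.univ.erase i, Psi n m i j := by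
  rw [Phi, derivative_mul, deriv_Zpow, deriv_prodZ, Finset.mul_sum, Finset.mul_sum]
  congr 1
  · rw [Nat.sub_sub]; ring
  · refine Finset.sum_congr rfl fun j hj => ?_
    rw [Psi]; ring

lemma deriv_master {n : ℕ} (m : ℕ) :
    derivative (∏ k : Fin n, ZZ k ^ m) =
      (m : Polynomial (MvPolynomial (Fin n) ℤ)) * ∑ k : Fin n, Phi n m k := by
  rw [deriv_prodZ, Finset.mul_sum]
  exact Finset.sum_congr rfl fun j _ => by rw [Phi]

lemma om_mulVec {R : Type*} [CommRing R] {n : ℕ} {i j : Fin n} (hij : i ≠ j)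
    (v : Fin n → R) (k : Fin n) :
    (Om R i j).mulVec v k = if k = i then v j - v i else if k = j then v i - v j else 0 := by
  have hstep : ∀ l, Om R i j k l * v l =
      ((if k = i then (if l = i then -v i else 0) + (if l = j then v j else 0)
        else if k = j then (if l = i then v i else 0) + (if l = j then -v j else 0)
        else 0)) := by
    intro l
    simp only [Om]
    split_ifs <;> simp_all
  rw [Matrix.mulVec, dotProduct, Finset.sum_congr rfl fun l _ => hstep l]
  split_ifs with h1 h2
  · rw [Finset.sum_add_distrib, Finset.sum_ite_eq' _ i, Finset.sum_ite_eq' _ j]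
    simp [sub_eq_add_neg, add_comm]
  · rw [Finset.sum_add_distrib, Finset.sum_ite_eq' _ i, Finset.sum_ite_eq' _ j]
    simp [sub_eq_add_neg]
  · simp

lemma keyne {n m : ℕ} (hm : 1 ≤ m) {i k : Fin n} (hik : i ≠ k) :
    C (∏ j ∈ Finset.univ.erase i, (MvPolynomial.X i - MvPolynomial.X j)) * pdd i (Phi n m k) +
      (m : Polynomial (MvPolynomial (Fin n) ℤ)) *
        (C (∏ l ∈ (Finset.univ.erase i).erase k, (MvPolynomial.X i - MvPolynomial.X l)) *
          (Phi n m i - Phi n m k)) = 0 := by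
  have hk : k ∈ Finset.univ.erase i :=
    Finset.mem_erase.2 ⟨fun h => hik h.symm, Finset.mem_univ _⟩
  rw [pdd_phi_ne m hik, phi_sub_phi hm hik,
    ← Finset.mul_prod_erase _ (fun j => MvPolynomial.X i - MvPolynomial.X j) hk, map_mul]
  ring

lemma keyself {n m : ℕ} (hm : 1 ≤ m) (i : Fin n) :
    C (∏ j ∈ Finset.univ.erase i, (MvPolynomial.X i - MvPolynomial.X j)) * pdd i (Phi n m i) +
      (m : Polynomial (MvPolynomial (Fin n) ℤ)) *
        ∑ j ∈ Finset.univ.erase i,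
          C (∏ l ∈ (Finset.univ.erase i).erase j, (MvPolynomial.X i - MvPolynomial.X l)) *
            (Phi n m j - Phi n m i) =
    -(C (∏ j ∈ Finset.univ.erase i, (MvPolynomial.X i - MvPolynomial.X j)) *
        derivative (Phi n m i)) := by
  have hterm : ∀ j ∈ Finset.univ.erase i,
      C (∏ l ∈ (Finset.univ.erase i).erase j, (MvPolynomial.X i - MvPolynomial.X l)) *
          (Phi n m j - Phi n m i) =
        -(C (∏ j ∈ Finset.univ.erase i, (MvPolynomial.X i - MvPolynomial.X j)) * Psi n m i j) := by
    intro j hj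
    have hij : i ≠ j := fun h => (Finset.mem_erase.1 hj).1 h.symm
    rw [show Phi n m j - Phi n m i = -(Phi n m i - Phi n m j) by ring, phi_sub_phi hm hij,
      ← Finset.mul_prod_erase _ (fun l => MvPolynomial.X i - MvPolynomial.X l) hj, map_mul]
    ring
  rw [Finset.sum_congr rfl hterm, pdd_phi_self, deriv_phi, Finset.sum_neg_distrib,
    ← Finset.mul_sum]
  ring

/-- for `ℓ = 1,…,g` the vector `I_{s,ℓ}` of coefficients of
`t^(ℓp^s - 1)` in `(Φ_s/(t-z_1), …, Φ_s/(t-z_n))` is a polynomial solution modulo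
`p^s` of the KZ system: after clearing the denominators `z_i - z_j`, one has
`∏_{j≠i}(z_i-z_j) · ∂I/∂z_i ≡ -((p^s-1)/2)·Σ_{j≠i} ∏_{l≠i,j}(z_i-z_l) · Ω_{ij}I
(mod p^s)` for every `i`, and `I_{s,ℓ,1} + ⋯ + I_{s,ℓ,n} ≡ 0 (mod p^s)`. -/
theorem ps_hypergeometric_solutions (p s g : ℕ) (hp : p.Prime) (hodd : Odd p)
    (hs : 1 ≤ s) (ℓ : ℕ) (hℓ1 : 1 ≤ ℓ) (hℓg : ℓ ≤ g) :
    (∀ i k : Fin (2 * g + 1),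
      ((p : MvPolynomial (Fin (2 * g + 1)) ℤ)) ^ s ∣
        (∏ j ∈ Finset.univ.erase i, (MvPolynomial.X i - MvPolynomial.X j)) *
            MvPolynomial.pderiv i
              ((masterQuot p s (2 * g + 1) k).coeff (ℓ * p ^ s - 1)) +
          ((p ^ s - 1) / 2) •
            ∑ j ∈ Finset.univ.erase i,
              (∏ l ∈ (Finset.univ.erase i).erase j,
                  (MvPolynomial.X i - MvPolynomial.X l)) *
                ((Om (MvPolynomial (Fin (2 * g + 1)) ℤ) i j).mulVec
                  (fun m => (masterQuot p s (2 * g + 1) m).coeff (ℓ * p ^ s - 1)) k)) ∧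
    ((p : MvPolynomial (Fin (2 * g + 1)) ℤ)) ^ s ∣
      ∑ k : Fin (2 * g + 1), (masterQuot p s (2 * g + 1) k).coeff (ℓ * p ^ s - 1) := by
  have hp3 : 3 ≤ p := by
    rcases hodd with ⟨t, ht⟩
    have := hp.two_le
    omega
  have hps3 : 3 ≤ p ^ s := le_trans hp3 (Nat.le_self_pow (by omega) p)
  have hM : 1 ≤ (p ^ s - 1) / 2 := by omega
  have hoddps : Odd (p ^ s) := hodd.pow
  have h2M : 2 * ((p ^ s - 1) / 2) = p ^ s - 1 := by
    rcases hoddps with ⟨t, ht⟩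
    omega
  have hN : (ℓ * p ^ s - 1) + 1 = ℓ * p ^ s := by
    have h1 : 1 * 1 ≤ ℓ * p ^ s := Nat.mul_le_mul hℓ1 (by omega)
    omega
  constructor
  · intro i k
    simp only [masterQuot_eq]
    by_cases hk : k = i
    · subst hk
      -- diagonal case
      have hsum : ∀ j ∈ Finset.univ.erase k,
          (Om (MvPolynomial (Fin (2 * g + 1)) ℤ) k j).mulVec
            (fun m => (Phi (2 * g + 1) ((p ^ s - 1) / 2) m).coeff (ℓ * p ^ s - 1)) k =
          (Phi (2 * g + 1) ((p ^ s - 1) / 2) j).coeff (ℓ * p ^ s - 1) -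
            (Phi (2 * g + 1) ((p ^ s - 1) / 2) k).coeff (ℓ * p ^ s - 1) := by
        intro j hj
        have hij : k ≠ j := fun h => (Finset.mem_erase.1 hj).1 h.symm
        rw [om_mulVec hij, if_pos rfl]
      have hNc : ((ℓ * p ^ s - 1 : ℕ) : MvPolynomial (Fin (2 * g + 1)) ℤ) + 1 =
          (ℓ : MvPolynomial (Fin (2 * g + 1)) ℤ) * (p : MvPolynomial (Fin (2 * g + 1)) ℤ) ^ s := by
        have h := congrArg (fun t : ℕ => (t : MvPolynomial (Fin (2 * g + 1)) ℤ)) hN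
        push_cast at h
        exact h
      have key := congrArg (fun f => coeff f (ℓ * p ^ s - 1)) (keyself hM k)
      simp only [coeff_add, coeff_neg, ← C_eq_natCast, coeff_C_mul, finset_sum_coeff,
        coeff_sub, coeff_pdd, coeff_derivative, hN, hNc] at key
      rw [Finset.sum_congr rfl (fun j hj => by rw [hsum j hj])]
      rw [nsmul_eq_mul, key]
      refine ⟨-((∏ j ∈ Finset.univ.erase k, (MvPolynomial.X k - MvPolynomial.X j)) *
        (Phi (2 * g + 1) ((p ^ s - 1) / 2) k).coeff (ℓ * p ^ s) * (ℓ : _)), ?_⟩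
      ring
    · -- off-diagonal case
      have hik : i ≠ k := fun h => hk h.symm
      have hkmem : k ∈ Finset.univ.erase i :=
        Finset.mem_erase.2 ⟨hk, Finset.mem_univ _⟩
      rw [Finset.sum_eq_single_of_mem k hkmem (fun j hj hjk => ?_)]
      · rw [om_mulVec (fun h => (Finset.mem_erase.1 hkmem).1 h.symm), if_neg hk,
          if_pos rfl]
        have key := congrArg (fun f => coeff f (ℓ * p ^ s - 1)) (keyne hM hik)
        simp only [coeff_add, ← C_eq_natCast, coeff_C_mul, coeff_sub, coeff_pdd,
          coeff_zero] at key
        rw [nsmul_eq_mul, key]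
        exact dvd_zero _
      · have hij : i ≠ j := fun h => (Finset.mem_erase.1 hj).1 h.symm
        rw [om_mulVec hij, if_neg hk, if_neg (fun h : k = j => hjk h.symm), mul_zero]
  · have key := congrArg (fun f => coeff f (ℓ * p ^ s - 1))
      (deriv_master (n := 2 * g + 1) ((p ^ s - 1) / 2))
    simp only [coeff_derivative, hN, ← C_eq_natCast, coeff_C_mul, finset_sum_coeff] at key
    simp only [masterQuot_eq]
    -- coprimality of (p^s-1)/2 and p^s
    have hndvd : ¬ p ∣ (p ^ s - 1) / 2 := by
      intro hd
      have h1 : p ∣ p ^ s := dvd_pow_self p (by omega)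
      have h2 : p ∣ 2 * ((p ^ s - 1) / 2) := Dvd.dvd.mul_left hd 2
      rw [h2M] at h2
      have h3 : p ∣ p ^ s - (p ^ s - 1) := Nat.dvd_sub h1 h2
      have h4 : p ^ s - (p ^ s - 1) = 1 := by omega
      rw [h4] at h3
      have := Nat.le_of_dvd one_pos h3
      omega
    have hcop : Nat.Coprime ((p ^ s - 1) / 2) (p ^ s) :=
      Nat.Coprime.pow_right s ((hp.coprime_iff_not_dvd.2 hndvd).symm)
    have hic : IsCoprime (((p ^ s - 1) / 2 : ℕ) : ℤ) ((p ^ s : ℕ) : ℤ) :=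
      Nat.isCoprime_iff_coprime.2 hcop
    obtain ⟨a, b, hab⟩ := hic
    set R := MvPolynomial (Fin (2 * g + 1)) ℤ
    have hab' : (a : R) * (((p ^ s - 1) / 2 : ℕ) : R) + (b : R) * (p : R) ^ s = 1 := by
      have h := congrArg (fun t : ℤ => (t : R)) hab
      simp only [Int.cast_add, Int.cast_mul, Int.cast_natCast, Int.cast_one] at h
      rw [Nat.cast_pow] at h
      exact h
    set S := ∑ k : Fin (2 * g + 1),
      (Phi (2 * g + 1) ((p ^ s - 1) / 2) k).coeff (ℓ * p ^ s - 1) with hS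
    set c := (∏ k : Fin (2 * g + 1), ZZ k ^ ((p ^ s - 1) / 2)).coeff (ℓ * p ^ s) with hc
    have hNc : ((ℓ * p ^ s - 1 : ℕ) : R) + 1 = (ℓ : R) * (p : R) ^ s := by
      have h := congrArg (fun t : ℕ => (t : R)) hN
      push_cast at h
      exact h
    rw [hNc] at key
    refine ⟨(a : R) * c * (ℓ : R) + (b : R) * S, ?_⟩
    have key' : c * ((ℓ : R) * (p : R) ^ s) = (((p ^ s - 1) / 2 : ℕ) : R) * S := key
    calc S = ((a : R) * (((p ^ s - 1) / 2 : ℕ) : R) + (b : R) * (p : R) ^ s) * S := by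
            rw [hab', one_mul]
      _ = (a : R) * ((((p ^ s - 1) / 2 : ℕ) : R) * S) + (b : R) * (p : R) ^ s * S := by ring
      _ = (a : R) * (c * ((ℓ : R) * (p : R) ^ s)) + (b : R) * (p : R) ^ s * S := by
            rw [← key']
      _ = (p : R) ^ s * ((a : R) * c * (ℓ : R) + (b : R) * S) := by ring
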